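/- There is a well-defined group homomorphism π : L(6,3,2) → L(2,2,2,2) with π(u1) = x4, π(u2) = c, π(u3) = x1 + x2 + x3 (where c is the canonical element of L(2,2,2,2)), and its kernel is the cyclic group of order 3 generated by 4u1 + u2 - c', where c' is the canonical element of L(6,3,2). -/
import Mathlib


/-- Relations subgroup for the string group of weight type `p`:
generated by the elements `p i • x i - p 0 • x 0`. -/
noncomputable def stringRels (t : ℕ) (p : Fin (t + 1) → ℕ) :
    AddSubgroup (Fin (t + 1) →₀ ℤ) :=
  AddSubgroup.closure (Set.range fun i : Fin (t + 1) =>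
    Finsupp.single i (p i : ℤ) - Finsupp.single 0 (p 0 : ℤ))

/-- The string group `L(p)`. -/
abbrev StringGroup (t : ℕ) (p : Fin (t + 1) → ℕ) :=
  (Fin (t + 1) →₀ ℤ) ⧸ stringRels t p

/-- The generator `x_i` of the string group. -/
noncomputable def gen (t : ℕ) (p : Fin (t + 1) → ℕ) (i : Fin (t + 1)) :
    StringGroup t p :=
  QuotientAddGroup.mk (Finsupp.single i 1)

/-- The canonical element `c = p_i • x_i` of the string group. -/
noncomputable def can (t : ℕ) (p : Fin (t + 1) → ℕ) : StringGroup t p :=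
  (p 0 : ℤ) • gen t p 0


section lift
variable {t : ℕ} {p : Fin (t + 1) → ℕ} {N : Type*} [AddCommGroup N]

/-- Lift a map on generators satisfying the relations to a hom on the string group. -/
noncomputable def stringLift (g : Fin (t + 1) → N)
    (h : ∀ i, (p i : ℤ) • g i = (p 0 : ℤ) • g 0) :
    StringGroup t p →+ N :=
  QuotientAddGroup.lift _ (Finsupp.liftAddHom fun i => zmultiplesHom N (g i)) (by
    have hle : stringRels t p ≤ (Finsupp.liftAddHom fun i => zmultiplesHom N (g i)).ker := by
      rw [stringRels, AddSubgroup.closure_le]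
      rintro _ ⟨i, rfl⟩
      simp only [SetLike.mem_coe]
      rw [AddMonoidHom.mem_ker, map_sub, Finsupp.liftAddHom_apply_single,
        Finsupp.liftAddHom_apply_single]
      simp [sub_eq_zero, h i]
    exact fun x hx => hle hx)

@[simp] lemma stringLift_gen (g : Fin (t + 1) → N)
    (h : ∀ i, (p i : ℤ) • g i = (p 0 : ℤ) • g 0) (i : Fin (t + 1)) :
    stringLift g h (gen t p i) = g i := by
  simp [stringLift, gen, QuotientAddGroup.lift_mk']

lemma string_rel (i : Fin (t + 1)) : (p i : ℤ) • gen t p i = can t p := by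
  rw [gen, can, gen, ← QuotientAddGroup.mk_zsmul, ← QuotientAddGroup.mk_zsmul,
    QuotientAddGroup.eq]
  have : -((p i : ℤ) • Finsupp.single i (1:ℤ)) + (p 0 : ℤ) • Finsupp.single 0 1
      = -(Finsupp.single i (p i : ℤ) - Finsupp.single 0 (p 0 : ℤ)) := by
    rw [Finsupp.smul_single, Finsupp.smul_single]
    ring_nf
    simp [neg_sub]
    abel
  rw [this]
  exact neg_mem (AddSubgroup.subset_closure ⟨i, rfl⟩)

end lift

section main

local notation "L" => StringGroup 2 ![6, 3, 2]
local notation "M" => StringGroup 3 ![2, 2, 2, 2]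

lemma relM (i : Fin 4) : (2 : ℤ) • gen 3 ![2, 2, 2, 2] i = can 3 ![2, 2, 2, 2] := by
  have h := string_rel (p := ![2, 2, 2, 2]) i
  have h2 : ((![2, 2, 2, 2] i : ℕ) : ℤ) = 2 := by fin_cases i <;> rfl
  rwa [h2] at h

lemma canM : can 3 ![2, 2, 2, 2] = (2 : ℤ) • gen 3 ![2, 2, 2, 2] 0 := (relM 0).symm

lemma relL (i : Fin 3) : ((![6, 3, 2] i : ℕ) : ℤ) • gen 2 ![6, 3, 2] i
    = (6 : ℤ) • gen 2 ![6, 3, 2] 0 := by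
  have h := string_rel (p := ![6, 3, 2]) i
  rwa [show can 2 ![6, 3, 2] = (6 : ℤ) • gen 2 ![6, 3, 2] 0 from rfl] at h

lemma canL : can 2 ![6, 3, 2] = (6 : ℤ) • gen 2 ![6, 3, 2] 0 := rfl

/-- the projection π -/
noncomputable def piHom : L →+ M :=
  stringLift
    ![gen 3 ![2, 2, 2, 2] 3, can 3 ![2, 2, 2, 2],
      gen 3 ![2, 2, 2, 2] 0 + gen 3 ![2, 2, 2, 2] 1 + gen 3 ![2, 2, 2, 2] 2] (by
    intro i
    fin_cases i
    · rfl
    · show (3 : ℤ) • can 3 ![2, 2, 2, 2] = (6 : ℤ) • gen 3 ![2, 2, 2, 2] 3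
      rw [← relM 3]; module
    · show (2 : ℤ) • (gen 3 ![2, 2, 2, 2] 0 + gen 3 ![2, 2, 2, 2] 1 + gen 3 ![2, 2, 2, 2] 2)
        = (6 : ℤ) • gen 3 ![2, 2, 2, 2] 3
      have e : (2 : ℤ) • gen 3 ![2, 2, 2, 2] 0 + (2 : ℤ) • gen 3 ![2, 2, 2, 2] 1
          + (2 : ℤ) • gen 3 ![2, 2, 2, 2] 2
          = (2 : ℤ) • gen 3 ![2, 2, 2, 2] 3 + (2 : ℤ) • gen 3 ![2, 2, 2, 2] 3
          + (2 : ℤ) • gen 3 ![2, 2, 2, 2] 3 := by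
        rw [relM 0, relM 1, relM 2, relM 3]
      calc (2 : ℤ) • (gen 3 ![2, 2, 2, 2] 0 + gen 3 ![2, 2, 2, 2] 1 + gen 3 ![2, 2, 2, 2] 2)
          = (2 : ℤ) • gen 3 ![2, 2, 2, 2] 0 + (2 : ℤ) • gen 3 ![2, 2, 2, 2] 1
            + (2 : ℤ) • gen 3 ![2, 2, 2, 2] 2 := by module
        _ = _ := e
        _ = (6 : ℤ) • gen 3 ![2, 2, 2, 2] 3 := by module)

@[simp] lemma piHom_gen0 : piHom (gen 2 ![6, 3, 2] 0) = gen 3 ![2, 2, 2, 2] 3 :=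
  stringLift_gen _ _ 0
@[simp] lemma piHom_gen1 : piHom (gen 2 ![6, 3, 2] 1) = can 3 ![2, 2, 2, 2] :=
  stringLift_gen _ _ 1
@[simp] lemma piHom_gen2 : piHom (gen 2 ![6, 3, 2] 2)
    = gen 3 ![2, 2, 2, 2] 0 + gen 3 ![2, 2, 2, 2] 1 + gen 3 ![2, 2, 2, 2] 2 :=
  stringLift_gen _ _ 2

/-- the kernel generator -/
noncomputable def kel : L :=
  (4 : ℤ) • gen 2 ![6, 3, 2] 0 + gen 2 ![6, 3, 2] 1 - can 2 ![6, 3, 2]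

lemma kel_eq : kel = gen 2 ![6, 3, 2] 1 - (2 : ℤ) • gen 2 ![6, 3, 2] 0 := by
  rw [kel, canL]
  module

lemma piHom_kel : piHom kel = 0 := by
  rw [kel_eq, map_sub, map_zsmul, piHom_gen0, piHom_gen1, ← relM 3, sub_self]

lemma three_kel : (3 : ℤ) • kel = 0 := by
  have h1 : (3 : ℤ) • gen 2 ![6, 3, 2] 1 = (6 : ℤ) • gen 2 ![6, 3, 2] 0 := by
    simpa using relL 1
  calc (3 : ℤ) • kel = (3 : ℤ) • gen 2 ![6, 3, 2] 1 - (6 : ℤ) • gen 2 ![6, 3, 2] 0 := by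
        rw [kel_eq]; module
    _ = 0 := by rw [h1]; simp

lemma kel_ne : kel ≠ 0 := by
  have hφ : ∀ i : Fin 3, ((![6, 3, 2] i : ℕ) : ℤ) • (![(0 : ZMod 3), 1, 0] i)
      = ((![6, 3, 2] 0 : ℕ) : ℤ) • (![(0 : ZMod 3), 1, 0] 0) := by
    intro i; fin_cases i <;> decide
  set φ := stringLift (p := ![6, 3, 2]) ![(0 : ZMod 3), 1, 0] hφ with hφdef
  intro h
  have : φ kel = 0 := by rw [h, map_zero]
  rw [kel_eq, map_sub, map_zsmul, stringLift_gen, stringLift_gen] at this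
  revert this
  decide


lemma stringHom_ext {t : ℕ} {p : Fin (t + 1) → ℕ} {N : Type*} [AddCommGroup N]
    {f g : StringGroup t p →+ N} (h : ∀ i, f (gen t p i) = g (gen t p i)) : f = g := by
  have key : f.comp (QuotientAddGroup.mk' _) = g.comp (QuotientAddGroup.mk' _) := by
    apply Finsupp.addHom_ext
    intro a b
    have hs : (Finsupp.single a b : Fin (t+1) →₀ ℤ) = b • Finsupp.single a (1 : ℤ) := by
      rw [Finsupp.smul_single, smul_eq_mul, mul_one]
    simp only [AddMonoidHom.comp_apply, QuotientAddGroup.mk'_apply, hs]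
    rw [show ((b • Finsupp.single a (1:ℤ) : Fin (t+1) →₀ ℤ) : StringGroup t p)
        = b • gen t p a from (QuotientAddGroup.mk_zsmul _ _ _), map_zsmul, map_zsmul, h a]
  refine AddMonoidHom.ext fun x => ?_
  obtain ⟨z, rfl⟩ := QuotientAddGroup.mk'_surjective (stringRels t p) x
  exact DFunLike.congr_fun key z

noncomputable def mkQ : L →+ L ⧸ AddSubgroup.zmultiples kel :=
  QuotientAddGroup.mk' _

lemma mkQ_rel : (2 : ℤ) • mkQ (gen 2 ![6, 3, 2] 2) = (6 : ℤ) • mkQ (gen 2 ![6, 3, 2] 0) := by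
  have h : (2 : ℤ) • gen 2 ![6, 3, 2] 2 = (6 : ℤ) • gen 2 ![6, 3, 2] 0 := by
    simpa using relL 2
  have h2 := congrArg mkQ h
  rwa [map_zsmul, map_zsmul] at h2

lemma mkQ_g1 : mkQ (gen 2 ![6, 3, 2] 1) = (2 : ℤ) • mkQ (gen 2 ![6, 3, 2] 0) := by
  have h : mkQ (gen 2 ![6, 3, 2] 1 - (2 : ℤ) • gen 2 ![6, 3, 2] 0) = 0 := by
    rw [mkQ, QuotientAddGroup.mk'_apply, QuotientAddGroup.eq_zero_iff]
    exact ⟨1, by show (1 : ℤ) • kel = _; rw [one_smul, kel_eq]⟩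
  rw [map_sub, map_zsmul, sub_eq_zero] at h
  exact h

/-- the retraction ρ : M → L/⟨kel⟩ -/
noncomputable def rhoHom : M →+ L ⧸ AddSubgroup.zmultiples kel :=
  stringLift
    ![mkQ (gen 2 ![6, 3, 2] 0), mkQ (gen 2 ![6, 3, 2] 0),
      mkQ (gen 2 ![6, 3, 2] 2) - (2 : ℤ) • mkQ (gen 2 ![6, 3, 2] 0),
      mkQ (gen 2 ![6, 3, 2] 0)] (by
    intro i
    fin_cases i
    · rfl
    · rfl
    · show (2 : ℤ) • (mkQ (gen 2 ![6, 3, 2] 2) - (2 : ℤ) • mkQ (gen 2 ![6, 3, 2] 0))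
        = (2 : ℤ) • mkQ (gen 2 ![6, 3, 2] 0)
      calc (2 : ℤ) • (mkQ (gen 2 ![6, 3, 2] 2) - (2 : ℤ) • mkQ (gen 2 ![6, 3, 2] 0))
          = (2 : ℤ) • mkQ (gen 2 ![6, 3, 2] 2) - (4 : ℤ) • mkQ (gen 2 ![6, 3, 2] 0) := by
            module
        _ = (2 : ℤ) • mkQ (gen 2 ![6, 3, 2] 0) := by rw [mkQ_rel]; module
    · rfl)

lemma rho_comp_pi : rhoHom.comp piHom = mkQ := by
  refine stringHom_ext (t := 2) (p := ![6, 3, 2])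
    (N := L ⧸ AddSubgroup.zmultiples kel) fun i => ?_
  fin_cases i
  · show rhoHom (piHom (gen 2 ![6, 3, 2] 0)) = mkQ (gen 2 ![6, 3, 2] 0)
    rw [piHom_gen0]
    exact stringLift_gen _ _ 3
  · show rhoHom (piHom (gen 2 ![6, 3, 2] 1)) = mkQ (gen 2 ![6, 3, 2] 1)
    rw [piHom_gen1, canM, map_zsmul, mkQ_g1]
    congr 1
    exact stringLift_gen _ _ 0
  · show rhoHom (piHom (gen 2 ![6, 3, 2] 2)) = mkQ (gen 2 ![6, 3, 2] 2)
    rw [piHom_gen2, map_add, map_add]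
    have h0 : rhoHom (gen 3 ![2, 2, 2, 2] 0) = mkQ (gen 2 ![6, 3, 2] 0) := stringLift_gen _ _ 0
    have h1 : rhoHom (gen 3 ![2, 2, 2, 2] 1) = mkQ (gen 2 ![6, 3, 2] 0) := stringLift_gen _ _ 1
    have h2 : rhoHom (gen 3 ![2, 2, 2, 2] 2)
        = mkQ (gen 2 ![6, 3, 2] 2) - (2 : ℤ) • mkQ (gen 2 ![6, 3, 2] 0) := stringLift_gen _ _ 2
    rw [h0, h1, h2]
    module

lemma ker_eq : piHom.ker = AddSubgroup.zmultiples kel := by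
  apply le_antisymm
  · intro x hx
    have hc := DFunLike.congr_fun rho_comp_pi x
    rw [AddMonoidHom.comp_apply, AddMonoidHom.mem_ker.mp hx, map_zero] at hc
    have := (QuotientAddGroup.eq_zero_iff x).mp hc.symm
    exact this
  · intro x hx
    obtain ⟨n, rfl⟩ := AddSubgroup.mem_zmultiples_iff.mp hx
    rw [AddMonoidHom.mem_ker, map_zsmul, piHom_kel, smul_zero]

lemma order_kel : addOrderOf kel = 3 := by
  haveI : Fact (Nat.Prime 3) := ⟨by norm_num⟩
  refine addOrderOf_eq_prime ?_ kel_ne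
  have := three_kel
  rwa [show ((3 : ℤ) • kel) = (3 : ℕ) • kel from by push_cast [natCast_zsmul]; rfl] at this

end main

theorem stmt_15 :
    ∃ π : StringGroup 2 ![6, 3, 2] →+ StringGroup 3 ![2, 2, 2, 2],
      π (gen 2 ![6, 3, 2] 0) = gen 3 ![2, 2, 2, 2] 3 ∧
      π (gen 2 ![6, 3, 2] 1) = can 3 ![2, 2, 2, 2] ∧
      π (gen 2 ![6, 3, 2] 2) =
        gen 3 ![2, 2, 2, 2] 0 + gen 3 ![2, 2, 2, 2] 1 + gen 3 ![2, 2, 2, 2] 2 ∧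
      π.ker = AddSubgroup.zmultiples
        ((4 : ℤ) • gen 2 ![6, 3, 2] 0 + gen 2 ![6, 3, 2] 1 - can 2 ![6, 3, 2]) ∧
      addOrderOf
        ((4 : ℤ) • gen 2 ![6, 3, 2] 0 + gen 2 ![6, 3, 2] 1 - can 2 ![6, 3, 2]) = 3 := by
  exact ⟨piHom, piHom_gen0, piHom_gen1, piHom_gen2, ker_eq, order_kel⟩
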